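/- For any probability measure μ on ℝ, the 1-Wasserstein distance W₁(μ,ν) between two probability measures μ, ν equals the L¹([0,1]) distance between their pseudo-inverse functions X_μ(z) = inf{x ∈ ℝ : μ((−∞,x]) > z} and X_ν, and also equals ∫_ℝ |F_μ(x) − F_ν(x)| dx where F_μ, F_ν are the cumulative distribution functions. -/

import Mathlib

open MeasureTheory

/-- The 1-Wasserstein distance between two measures on `ℝ`, defined as the infimum of
transport costs over all couplings. -/
noncomputable def wasserstein1 (μ ν : Measure ℝ) : ℝ :=
  ⨅ γ : {γ : Measure (ℝ × ℝ) // γ.map Prod.fst = μ ∧ γ.map Prod.snd = ν},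
    ∫ p : ℝ × ℝ, |p.1 - p.2| ∂(γ : Measure (ℝ × ℝ))

/-- The pseudo-inverse `X_μ(z) = inf {x : μ((-∞,x]) > z}` of the cumulative
distribution function of `μ`. -/
noncomputable def pseudoInverse (μ : Measure ℝ) (z : ℝ) : ℝ :=
  sInf {x : ℝ | z < (μ (Set.Iic x)).toReal}

open Set

namespace W1Aux

noncomputable def cdfR (μ : Measure ℝ) (t : ℝ) : ℝ := (μ (Set.Iic t)).toReal

lemma cdfR_mono (μ : Measure ℝ) [IsProbabilityMeasure μ] : Monotone (cdfR μ) :=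
  fun a b hab => ENNReal.toReal_mono (measure_ne_top μ _)
    (measure_mono (Iic_subset_Iic.2 hab))

lemma cdfR_nonneg (μ : Measure ℝ) (t : ℝ) : 0 ≤ cdfR μ t := ENNReal.toReal_nonneg

lemma cdfR_le_one (μ : Measure ℝ) [IsProbabilityMeasure μ] (t : ℝ) : cdfR μ t ≤ 1 := by
  have h := measure_mono (μ := μ) (subset_univ (Iic t))
  rw [measure_univ] at h
  simpa [cdfR] using ENNReal.toReal_mono (by simp) h

lemma cdfR_measurable (μ : Measure ℝ) [IsProbabilityMeasure μ] : Measurable (cdfR μ) :=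
  (cdfR_mono μ).measurable

lemma ofReal_cdfR (μ : Measure ℝ) [IsProbabilityMeasure μ] (t : ℝ) :
    ENNReal.ofReal (cdfR μ t) = μ (Iic t) := ENNReal.ofReal_toReal (measure_ne_top μ _)

/-- The target set for the pseudo-inverse. -/
lemma cdfR_set_nonempty (μ : Measure ℝ) [IsProbabilityMeasure μ] {z : ℝ} (hz : z < 1) :
    {x : ℝ | z < cdfR μ x}.Nonempty := by
  have h := tendsto_measure_Iic_atTop μ
  rw [measure_univ] at h
  have h' : Filter.Tendsto (fun x => cdfR μ x) Filter.atTop (nhds 1) := by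
    have := (ENNReal.tendsto_toReal (by simp : (1:ENNReal) ≠ ⊤)).comp h
    simpa [cdfR, Function.comp_def] using this
  have := h'.eventually (eventually_gt_nhds hz)
  rcases this.exists with ⟨x, hx⟩
  exact ⟨x, hx⟩

lemma cdfR_set_bddBelow (μ : Measure ℝ) [IsProbabilityMeasure μ] {z : ℝ} (hz : 0 < z) :
    BddBelow {x : ℝ | z < cdfR μ x} := by
  have h := tendsto_measure_Ici_atBot μ
  rw [measure_univ] at h
  have h' : Filter.Tendsto (fun x => (μ (Ici x)).toReal) Filter.atBot (nhds 1) := by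
    have := (ENNReal.tendsto_toReal (by simp : (1:ENNReal) ≠ ⊤)).comp h
    simpa [Function.comp_def] using this
  have : ∀ᶠ B in Filter.atBot, 1 - z < (μ (Ici B)).toReal :=
    h'.eventually (eventually_gt_nhds (by linarith))
  rcases this.exists with ⟨B, hB⟩
  refine ⟨B, fun x hx => ?_⟩
  by_contra hxB
  push_neg at hxB
  have hdisj : Iic x ⊆ (Ici B)ᶜ := by
    intro y hy
    simp only [mem_compl_iff, mem_Ici, not_le]
    exact lt_of_le_of_lt hy hxB
  have h1 : μ (Iic x) ≤ μ ((Ici B)ᶜ) := measure_mono hdisj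
  have h2 : μ ((Ici B)ᶜ) = 1 - μ (Ici B) := prob_compl_eq_one_sub measurableSet_Ici
  have h3 : cdfR μ x ≤ 1 - (μ (Ici B)).toReal := by
    have := ENNReal.toReal_mono (measure_ne_top μ _) h1
    rw [h2, ENNReal.toReal_sub_of_le prob_le_one (by simp)] at this
    simpa [cdfR] using this
  have hx' : z < cdfR μ x := hx
  linarith

lemma pseudoInverse_eq (μ : Measure ℝ) (z : ℝ) :
    pseudoInverse μ z = sInf {x : ℝ | z < cdfR μ x} := rfl

lemma pseudoInverse_le (μ : Measure ℝ) [IsProbabilityMeasure μ] {z t : ℝ} (hz : 0 < z)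
    (h : z < cdfR μ t) : pseudoInverse μ z ≤ t :=
  csInf_le (cdfR_set_bddBelow μ hz) h

lemma le_cdfR_of_pseudoInverse_le (μ : Measure ℝ) [IsProbabilityMeasure μ] {z t : ℝ}
    (hz : 0 < z) (hz1 : z < 1) (h : pseudoInverse μ z ≤ t) : z ≤ cdfR μ t := by
  have hne := cdfR_set_nonempty μ hz1
  have hbdd := cdfR_set_bddBelow μ hz
  have key : ∀ ε : ℝ, 0 < ε → z < cdfR μ (t + ε) := by
    intro ε hε
    have hlt : sInf {x : ℝ | z < cdfR μ x} < t + ε := lt_of_le_of_lt h (by linarith)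
    obtain ⟨x, hxS, hxlt⟩ := (csInf_lt_iff hbdd hne).1 hlt
    exact lt_of_lt_of_le hxS (cdfR_mono μ hxlt.le)
  have hiInt : ⋂ n : ℕ, Iic (t + 1 / (n + 1 : ℝ)) = Iic t := by
    ext x
    simp only [mem_iInter, mem_Iic]
    constructor
    · intro hx
      rw [le_iff_forall_pos_le_add]
      intro ε hε
      obtain ⟨n, hn⟩ := exists_nat_one_div_lt hε
      exact (hx n).trans (by linarith)
    · intro hx n
      have : (0 : ℝ) < 1 / (n + 1) := by positivity
      linarith
  have hanti : Antitone (fun n : ℕ => Iic (t + 1 / (n + 1 : ℝ))) := by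
    intro m n hmn
    apply Iic_subset_Iic.2
    have h1 : (1 : ℝ) / (n + 1) ≤ 1 / (m + 1) := by
      apply one_div_le_one_div_of_le (by positivity)
      exact_mod_cast by omega
    linarith
  have hminf : μ (Iic t) = ⨅ n : ℕ, μ (Iic (t + 1 / (n + 1 : ℝ))) := by
    rw [← hiInt]
    exact hanti.measure_iInter (fun n => measurableSet_Iic.nullMeasurableSet)
      ⟨0, measure_ne_top μ _⟩
  have hle : ENNReal.ofReal z ≤ μ (Iic t) := by
    rw [hminf]
    refine le_iInf fun n => ?_
    have := key (1 / (n + 1 : ℝ)) (by positivity)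
    rw [← ofReal_cdfR μ (t + 1 / (n + 1 : ℝ))]
    exact ENNReal.ofReal_le_ofReal this.le
  have := ENNReal.toReal_mono (measure_ne_top μ _) hle
  rwa [ENNReal.toReal_ofReal hz.le] at this

lemma pseudoInverse_monotoneOn (μ : Measure ℝ) [IsProbabilityMeasure μ] :
    MonotoneOn (pseudoInverse μ) (Ioo 0 1) := by
  intro a ha b hb hab
  exact csInf_le_csInf (cdfR_set_bddBelow μ ha.1) (cdfR_set_nonempty μ hb.2)
    (fun x hx => lt_of_le_of_lt hab hx)

lemma pseudoInverse_aemeasurable (μ : Measure ℝ) [IsProbabilityMeasure μ] :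
    AEMeasurable (pseudoInverse μ) (volume.restrict (Ioo (0:ℝ) 1)) :=
  aemeasurable_restrict_of_monotoneOn measurableSet_Ioo (pseudoInverse_monotoneOn μ)

instance : IsProbabilityMeasure (volume.restrict (Ioo (0:ℝ) 1)) :=
  ⟨by simp [Real.volume_Ioo]⟩

lemma map_pseudoInverse (μ : Measure ℝ) [IsProbabilityMeasure μ] :
    Measure.map (pseudoInverse μ) (volume.restrict (Ioo (0:ℝ) 1)) = μ := by
  have hmeas : AEMeasurable (pseudoInverse μ) (volume.restrict (Ioo (0:ℝ) 1)) :=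
    aemeasurable_restrict_of_monotoneOn measurableSet_Ioo (pseudoInverse_monotoneOn μ)
  haveI := Measure.isProbabilityMeasure_map hmeas
  refine Measure.ext_of_Iic _ _ (fun a => ?_)
  rw [Measure.map_apply_of_aemeasurable hmeas measurableSet_Iic,
    Measure.restrict_apply' measurableSet_Ioo]
  apply le_antisymm
  · have hsub : pseudoInverse μ ⁻¹' Iic a ∩ Ioo 0 1 ⊆ Ioc 0 (cdfR μ a) := fun z hz =>
      mem_Ioc.2 ⟨hz.2.1, le_cdfR_of_pseudoInverse_le μ hz.2.1 hz.2.2 hz.1⟩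
    exact (measure_mono hsub).trans
      (le_of_eq (by rw [Real.volume_Ioc, sub_zero, ofReal_cdfR]))
  · rw [← ofReal_cdfR, ← sub_zero (cdfR μ a), ← Real.volume_Ioo]
    refine measure_mono (fun z hz => ?_)
    have hz1 : z < 1 := lt_of_lt_of_le hz.2 (cdfR_le_one μ a)
    exact ⟨pseudoInverse_le μ hz.1 hz.2, hz.1, hz1⟩

/-- The "bad set" at level `t`: pairs separated by `t`. -/
def badSet (t : ℝ) : Set (ℝ × ℝ) :=
  {p | (p.1 ≤ t ∧ t < p.2) ∨ (p.2 ≤ t ∧ t < p.1)}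

lemma measurableSet_badSet (t : ℝ) : MeasurableSet (badSet t) := by
  apply MeasurableSet.union
  · exact (measurableSet_le measurable_fst measurable_const).inter
      (measurableSet_lt measurable_const measurable_snd)
  · exact (measurableSet_le measurable_snd measurable_const).inter
      (measurableSet_lt measurable_const measurable_fst)

lemma badSet_slice (p : ℝ × ℝ) :
    {t : ℝ | p ∈ badSet t} = Ico (min p.1 p.2) (max p.1 p.2) := by
  ext t
  rcases le_total p.1 p.2 with h | h
  · simp only [badSet, mem_setOf_eq, mem_Ico, min_eq_left h, max_eq_right h]
    constructor
    · rintro (⟨h1, h2⟩ | ⟨h1, h2⟩)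
      · exact ⟨h1, h2⟩
      · exact absurd (h.trans h1) (not_le.2 h2)
    · exact fun ⟨h1, h2⟩ => Or.inl ⟨h1, h2⟩
  · simp only [badSet, mem_setOf_eq, mem_Ico, min_eq_right h, max_eq_left h]
    constructor
    · rintro (⟨h1, h2⟩ | ⟨h1, h2⟩)
      · exact absurd (h.trans h1) (not_le.2 h2)
      · exact ⟨h1, h2⟩
    · exact fun ⟨h1, h2⟩ => Or.inr ⟨h1, h2⟩

lemma volume_badSet_slice (p : ℝ × ℝ) :
    volume {t : ℝ | p ∈ badSet t} = ENNReal.ofReal |p.1 - p.2| := by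
  rw [badSet_slice, Real.volume_Ico, max_sub_min_eq_abs, abs_sub_comm]

/-- The key Tonelli identity. -/
lemma lintegral_abs_sub (γ : Measure (ℝ × ℝ)) [SFinite γ] :
    ∫⁻ p, ENNReal.ofReal |p.1 - p.2| ∂γ = ∫⁻ t, γ (badSet t) := by
  have hS : MeasurableSet {q : (ℝ × ℝ) × ℝ | q.1 ∈ badSet q.2} := by
    apply MeasurableSet.union
    · exact (measurableSet_le (measurable_fst.comp measurable_fst) measurable_snd).inter
        (measurableSet_lt measurable_snd (measurable_snd.comp measurable_fst))
    · exact (measurableSet_le (measurable_snd.comp measurable_fst) measurable_snd).inter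
        (measurableSet_lt measurable_snd (measurable_fst.comp measurable_fst))
  have h1 : ∀ p : ℝ × ℝ, ENNReal.ofReal |p.1 - p.2|
      = ∫⁻ t, {q : (ℝ × ℝ) × ℝ | q.1 ∈ badSet q.2}.indicator (1 : (ℝ × ℝ) × ℝ → ENNReal) (p, t) := by
    intro p
    have : (fun t => {q : (ℝ × ℝ) × ℝ | q.1 ∈ badSet q.2}.indicator (1 : (ℝ × ℝ) × ℝ → ENNReal) (p, t))
        = Set.indicator {t : ℝ | p ∈ badSet t} (1 : ℝ → ENNReal) := by
      rfl
    rw [this, lintegral_indicator_one]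
    · exact (volume_badSet_slice p).symm
    · rw [badSet_slice]; exact measurableSet_Ico
  have h2 : ∀ t : ℝ, γ (badSet t)
      = ∫⁻ p, {q : (ℝ × ℝ) × ℝ | q.1 ∈ badSet q.2}.indicator (1 : (ℝ × ℝ) × ℝ → ENNReal) (p, t) ∂γ := by
    intro t
    have : (fun p => {q : (ℝ × ℝ) × ℝ | q.1 ∈ badSet q.2}.indicator (1 : (ℝ × ℝ) × ℝ → ENNReal) (p, t))
        = Set.indicator (badSet t) (1 : ℝ × ℝ → ENNReal) := by
      rfl
    rw [this, lintegral_indicator_one (measurableSet_badSet t)]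
  simp_rw [h1]
  rw [lintegral_lintegral_swap]
  · simp_rw [← h2]
  · exact (measurable_one.indicator hS).aemeasurable

/-- Any coupling of two probability measures is a probability measure. -/
lemma coupling_prob (μ ν : Measure ℝ) [IsProbabilityMeasure μ] (γ : Measure (ℝ × ℝ))
    (hf : γ.map Prod.fst = μ) : IsProbabilityMeasure γ := by
  constructor
  have := Measure.map_apply (μ := γ) measurable_fst MeasurableSet.univ
  rw [hf, measure_univ] at this
  simpa using this.symm

/-- Lower bound: the CDF distance at level `t` is at most the measure of the bad set. -/
lemma ofReal_abs_cdfR_le (μ ν : Measure ℝ) [IsProbabilityMeasure μ] [IsProbabilityMeasure ν]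
    (γ : Measure (ℝ × ℝ)) (hf : γ.map Prod.fst = μ) (hs : γ.map Prod.snd = ν) (t : ℝ) :
    ENNReal.ofReal |cdfR μ t - cdfR ν t| ≤ γ (badSet t) := by
  haveI := coupling_prob μ ν γ hf
  set A : Set (ℝ × ℝ) := Prod.fst ⁻¹' Iic t with hA_def
  set B : Set (ℝ × ℝ) := Prod.snd ⁻¹' Iic t with hB_def
  have hAm : MeasurableSet A := measurable_fst measurableSet_Iic
  have hBm : MeasurableSet B := measurable_snd measurableSet_Iic
  have hA : γ A = μ (Iic t) := by
    rw [← hf, Measure.map_apply measurable_fst measurableSet_Iic]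
  have hB : γ B = ν (Iic t) := by
    rw [← hs, Measure.map_apply measurable_snd measurableSet_Iic]
  have hbad : badSet t = (A \ B) ∪ (B \ A) := by
    ext p
    simp only [badSet, mem_setOf_eq, mem_union, mem_diff, hA_def, hB_def, mem_preimage,
      mem_Iic, not_le]
  have hdisj : Disjoint (A \ B) (B \ A) := disjoint_sdiff_sdiff
  have hγbad : γ (badSet t) = γ (A \ B) + γ (B \ A) := by
    rw [hbad, measure_union hdisj (hBm.diff hAm)]
  have e1 : (γ A).toReal = (γ (A ∩ B)).toReal + (γ (A \ B)).toReal := by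
    rw [← ENNReal.toReal_add (measure_ne_top γ _) (measure_ne_top γ _),
      measure_inter_add_diff A hBm]
  have e2 : (γ B).toReal = (γ (A ∩ B)).toReal + (γ (B \ A)).toReal := by
    rw [← ENNReal.toReal_add (measure_ne_top γ _) (measure_ne_top γ _)]
    rw [show A ∩ B = B ∩ A from inter_comm A B, measure_inter_add_diff B hAm]
  have habs : |cdfR μ t - cdfR ν t| ≤ (γ (badSet t)).toReal := by
    have h3 : (γ (badSet t)).toReal = (γ (A \ B)).toReal + (γ (B \ A)).toReal := by
      rw [hγbad, ENNReal.toReal_add (measure_ne_top γ _) (measure_ne_top γ _)]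
    have hμt : cdfR μ t = (γ A).toReal := by rw [hA]; rfl
    have hνt : cdfR ν t = (γ B).toReal := by rw [hB]; rfl
    rw [hμt, hνt, e1, e2, h3, abs_sub_le_iff]
    constructor <;> nlinarith [ENNReal.toReal_nonneg (a := γ (A \ B)),
      ENNReal.toReal_nonneg (a := γ (B \ A))]
  calc ENNReal.ofReal |cdfR μ t - cdfR ν t| ≤ ENNReal.ofReal (γ (badSet t)).toReal :=
        ENNReal.ofReal_le_ofReal habs
    _ = γ (badSet t) := ENNReal.ofReal_toReal (measure_ne_top γ _)

/-- The quantile (monotone rearrangement) coupling. -/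
noncomputable def quantileCoupling (μ ν : Measure ℝ) : Measure (ℝ × ℝ) :=
  Measure.map (fun z => (pseudoInverse μ z, pseudoInverse ν z)) (volume.restrict (Ioo 0 1))

lemma quantile_pair_aemeasurable (μ ν : Measure ℝ) [IsProbabilityMeasure μ]
    [IsProbabilityMeasure ν] :
    AEMeasurable (fun z => (pseudoInverse μ z, pseudoInverse ν z))
      (volume.restrict (Ioo (0:ℝ) 1)) :=
  (pseudoInverse_aemeasurable μ).prodMk (pseudoInverse_aemeasurable ν)

lemma quantileCoupling_fst (μ ν : Measure ℝ) [IsProbabilityMeasure μ]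
    [IsProbabilityMeasure ν] : (quantileCoupling μ ν).map Prod.fst = μ := by
  rw [quantileCoupling, AEMeasurable.map_map_of_aemeasurable
    measurable_fst.aemeasurable (quantile_pair_aemeasurable μ ν)]
  exact map_pseudoInverse μ

lemma quantileCoupling_snd (μ ν : Measure ℝ) [IsProbabilityMeasure μ]
    [IsProbabilityMeasure ν] : (quantileCoupling μ ν).map Prod.snd = ν := by
  rw [quantileCoupling, AEMeasurable.map_map_of_aemeasurable
    measurable_snd.aemeasurable (quantile_pair_aemeasurable μ ν)]
  exact map_pseudoInverse ν

/-- Auxiliary ordered version of the bad-set measure computation. -/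
lemma volume_quantile_badSet_aux (μ ν : Measure ℝ) [IsProbabilityMeasure μ]
    [IsProbabilityMeasure ν] (t : ℝ) (hab : cdfR μ t ≤ cdfR ν t) :
    volume ({z : ℝ | (pseudoInverse μ z ≤ t ∧ t < pseudoInverse ν z)
        ∨ (pseudoInverse ν z ≤ t ∧ t < pseudoInverse μ z)} ∩ Ioo 0 1)
      = ENNReal.ofReal (cdfR ν t - cdfR μ t) := by
  set a := cdfR μ t
  set b := cdfR ν t
  apply le_antisymm
  · have hsub : {z : ℝ | (pseudoInverse μ z ≤ t ∧ t < pseudoInverse ν z)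
        ∨ (pseudoInverse ν z ≤ t ∧ t < pseudoInverse μ z)} ∩ Ioo 0 1 ⊆ Icc a b := by
      rintro z ⟨hz, hz0, hz1⟩
      rcases hz with ⟨h1, h2⟩ | ⟨h1, h2⟩
      · have hza : z ≤ a := le_cdfR_of_pseudoInverse_le μ hz0 hz1 h1
        have hzb : b ≤ z := by
          by_contra hc
          push_neg at hc
          exact absurd (pseudoInverse_le ν hz0 hc) (not_le.2 h2)
        exact ⟨le_trans hab hzb, hza.trans hab⟩
      · have hzb : z ≤ b := le_cdfR_of_pseudoInverse_le ν hz0 hz1 h1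
        have hza : a ≤ z := by
          by_contra hc
          push_neg at hc
          exact absurd (pseudoInverse_le μ hz0 hc) (not_le.2 h2)
        exact ⟨hza, hzb⟩
    exact (measure_mono hsub).trans (le_of_eq Real.volume_Icc)
  · have hsub : Ioo a b ⊆ {z : ℝ | (pseudoInverse μ z ≤ t ∧ t < pseudoInverse ν z)
        ∨ (pseudoInverse ν z ≤ t ∧ t < pseudoInverse μ z)} ∩ Ioo 0 1 := by
      rintro z ⟨hza, hzb⟩
      have hz0 : 0 < z := lt_of_le_of_lt (cdfR_nonneg μ t) hza
      have hz1 : z < 1 := lt_of_lt_of_le hzb (cdfR_le_one ν t)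
      refine ⟨Or.inr ⟨pseudoInverse_le ν hz0 hzb, ?_⟩, hz0, hz1⟩
      by_contra hc
      push_neg at hc
      exact absurd (le_cdfR_of_pseudoInverse_le μ hz0 hz1 hc) (not_le.2 hza)
    exact le_trans (le_of_eq Real.volume_Ioo.symm) (measure_mono hsub)

lemma quantileCoupling_badSet (μ ν : Measure ℝ) [IsProbabilityMeasure μ]
    [IsProbabilityMeasure ν] (t : ℝ) :
    quantileCoupling μ ν (badSet t) = ENNReal.ofReal |cdfR μ t - cdfR ν t| := by
  rw [quantileCoupling, Measure.map_apply_of_aemeasurable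
    (quantile_pair_aemeasurable μ ν) (measurableSet_badSet t),
    Measure.restrict_apply' measurableSet_Ioo]
  have hpre : (fun z => (pseudoInverse μ z, pseudoInverse ν z)) ⁻¹' badSet t
      = {z : ℝ | (pseudoInverse μ z ≤ t ∧ t < pseudoInverse ν z)
        ∨ (pseudoInverse ν z ≤ t ∧ t < pseudoInverse μ z)} := rfl
  rw [hpre]
  rcases le_total (cdfR μ t) (cdfR ν t) with h | h
  · rw [volume_quantile_badSet_aux μ ν t h, abs_of_nonpos (by linarith), neg_sub]
  · have := volume_quantile_badSet_aux ν μ t h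
    rw [abs_of_nonneg (by linarith), ← this]
    congr 1
    ext z
    simp only [mem_inter_iff, mem_setOf_eq, or_comm]
lemma cost_integrable (μ ν : Measure ℝ) [IsProbabilityMeasure μ] [IsProbabilityMeasure ν]
    (hμ : Integrable (fun x : ℝ => |x|) μ) (hν : Integrable (fun x : ℝ => |x|) ν)
    (γ : Measure (ℝ × ℝ)) (hf : γ.map Prod.fst = μ) (hs : γ.map Prod.snd = ν) :
    Integrable (fun p : ℝ × ℝ => |p.1 - p.2|) γ := by
  haveI := coupling_prob μ ν γ hf
  have h1 : Integrable (fun p : ℝ × ℝ => |p.1|) γ := by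
    rw [← hf] at hμ
    exact (integrable_map_measure continuous_abs.aestronglyMeasurable
      measurable_fst.aemeasurable).1 hμ
  have h2 : Integrable (fun p : ℝ × ℝ => |p.2|) γ := by
    rw [← hs] at hν
    exact (integrable_map_measure continuous_abs.aestronglyMeasurable
      measurable_snd.aemeasurable).1 hν
  refine (h1.add h2).mono ((continuous_fst.sub continuous_snd).abs.aestronglyMeasurable) ?_
  refine Filter.Eventually.of_forall fun p => ?_
  have : |p.1 - p.2| ≤ |p.1| + |p.2| := by
    calc |p.1 - p.2| = |p.1 + -p.2| := by rw [sub_eq_add_neg]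
      _ ≤ |p.1| + |-p.2| := abs_add_le _ _
      _ = |p.1| + |p.2| := by rw [abs_neg]
  simpa [Real.norm_eq_abs, abs_abs, abs_of_nonneg (by positivity : (0:ℝ) ≤ |p.1| + |p.2|)]
    using this

end W1Aux

open W1Aux in
/-- On the real line, the 1-Wasserstein distance between probability measures with
finite first moments equals the `L¹([0,1])` distance of the pseudo-inverses of their
CDFs, and also the `L¹(ℝ)` distance of their CDFs. -/
theorem wasserstein1_eq_pseudoInverse_eq_cdf
    (μ ν : Measure ℝ) [IsProbabilityMeasure μ] [IsProbabilityMeasure ν]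
    (hμ : Integrable (fun x : ℝ => |x|) μ) (hν : Integrable (fun x : ℝ => |x|) ν) :
    wasserstein1 μ ν
        = ∫ z in Set.Ioo (0:ℝ) 1, |pseudoInverse μ z - pseudoInverse ν z| ∧
    wasserstein1 μ ν
        = ∫ x : ℝ, |(μ (Set.Iic x)).toReal - (ν (Set.Iic x)).toReal| := by
  set I : ENNReal := ∫⁻ t, ENNReal.ofReal |cdfR μ t - cdfR ν t| with hI_def
  set γ₀ := quantileCoupling μ ν with hγ₀_def
  haveI hprob₀ : IsProbabilityMeasure γ₀ := coupling_prob μ ν γ₀ (quantileCoupling_fst μ ν)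
  -- cost of each coupling as a lower integral
  have hcost_eq : ∀ γ : Measure (ℝ × ℝ), γ.map Prod.fst = μ → γ.map Prod.snd = ν →
      ∫ p : ℝ × ℝ, |p.1 - p.2| ∂γ = (∫⁻ p, ENNReal.ofReal |p.1 - p.2| ∂γ).toReal := by
    intro γ _ _
    exact integral_eq_lintegral_of_nonneg_ae (Filter.Eventually.of_forall fun p => abs_nonneg _)
      (continuous_fst.sub continuous_snd).abs.aestronglyMeasurable
  have hlt_top : ∀ γ : Measure (ℝ × ℝ), γ.map Prod.fst = μ → γ.map Prod.snd = ν →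
      ∫⁻ p, ENNReal.ofReal |p.1 - p.2| ∂γ < ⊤ := by
    intro γ h1 h2
    exact (cost_integrable μ ν hμ hν γ h1 h2).lintegral_lt_top
  have hI_le : ∀ γ : Measure (ℝ × ℝ), γ.map Prod.fst = μ → γ.map Prod.snd = ν →
      I ≤ ∫⁻ p, ENNReal.ofReal |p.1 - p.2| ∂γ := by
    intro γ h1 h2
    haveI := coupling_prob μ ν γ h1
    rw [lintegral_abs_sub γ]
    exact lintegral_mono fun t => ofReal_abs_cdfR_le μ ν γ h1 h2 t
  have hγ₀_lint : ∫⁻ p, ENNReal.ofReal |p.1 - p.2| ∂γ₀ = I := by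
    rw [lintegral_abs_sub γ₀, hI_def]
    exact lintegral_congr fun t => quantileCoupling_badSet μ ν t
  have hIfin : I ≠ ⊤ := by
    rw [← hγ₀_lint]
    exact (hlt_top γ₀ (quantileCoupling_fst μ ν) (quantileCoupling_snd μ ν)).ne
  -- the Wasserstein distance equals I.toReal
  haveI hne : Nonempty {γ : Measure (ℝ × ℝ) // γ.map Prod.fst = μ ∧ γ.map Prod.snd = ν} :=
    ⟨⟨μ.prod ν, by simp [Measure.map_fst_prod, Measure.map_snd_prod]⟩⟩
  have hW : wasserstein1 μ ν = I.toReal := by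
    apply le_antisymm
    · have hbdd : BddBelow (Set.range fun γ :
          {γ : Measure (ℝ × ℝ) // γ.map Prod.fst = μ ∧ γ.map Prod.snd = ν} =>
          ∫ p : ℝ × ℝ, |p.1 - p.2| ∂(γ : Measure (ℝ × ℝ))) := by
        refine ⟨0, ?_⟩
        rintro x ⟨γ, rfl⟩
        exact integral_nonneg fun p => abs_nonneg _
      have := ciInf_le hbdd ⟨γ₀, quantileCoupling_fst μ ν, quantileCoupling_snd μ ν⟩
      rw [wasserstein1]
      refine this.trans (le_of_eq ?_)
      rw [hcost_eq γ₀ (quantileCoupling_fst μ ν) (quantileCoupling_snd μ ν), hγ₀_lint]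
    · rw [wasserstein1]
      refine le_ciInf fun γ => ?_
      rw [hcost_eq γ.1 γ.2.1 γ.2.2]
      exact ENNReal.toReal_mono (hlt_top γ.1 γ.2.1 γ.2.2).ne (hI_le γ.1 γ.2.1 γ.2.2)
  constructor
  · rw [hW, ← hγ₀_lint,
      ← hcost_eq γ₀ (quantileCoupling_fst μ ν) (quantileCoupling_snd μ ν)]
    rw [hγ₀_def, quantileCoupling,
      integral_map (quantile_pair_aemeasurable μ ν) (f := fun p : ℝ × ℝ => |p.1 - p.2|)
        (continuous_fst.sub continuous_snd).abs.aestronglyMeasurable]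
  · rw [hW]
    refine (integral_eq_lintegral_of_nonneg_ae
      (Filter.Eventually.of_forall fun x => abs_nonneg _) ?_).symm
    exact (((cdfR_measurable μ).sub (cdfR_measurable ν)).abs).aestronglyMeasurable
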